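/- Let r ≥ 2 be an integer. For all φ with 0 < φ < π/(r+1), one has sin((r−1)φ)/sin((r+1)φ) > (r−1)/(r+1). -/

import Mathlib

open Real

/-- for `r ≥ 2` and `0 < φ < π/(r+1)`,
`sin((r−1)φ)/sin((r+1)φ) > (r−1)/(r+1)`. -/
theorem sin_ratio_gt (r : ℕ) (hr : 2 ≤ r) (φ : ℝ) (hφ0 : 0 < φ)
    (hφ1 : φ < π / (r + 1)) :
    Real.sin (((r : ℝ) - 1) * φ) / Real.sin (((r : ℝ) + 1) * φ) >
      ((r : ℝ) - 1) / ((r : ℝ) + 1) := by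
  have hr1 : (1 : ℝ) ≤ (r : ℝ) - 1 := by
    have : (2 : ℝ) ≤ (r : ℝ) := by exact_mod_cast hr
    linarith
  set a := ((r : ℝ) - 1) * φ with ha_def
  set b := ((r : ℝ) + 1) * φ with hb_def
  have ha : 0 < a := by
    have : (0:ℝ) < (r:ℝ) - 1 := by linarith
    positivity
  have hab : a < b := by
    have : ((r : ℝ) - 1) < (r : ℝ) + 1 := by linarith
    exact mul_lt_mul_of_pos_right this hφ0
  have hb : 0 < b := ha.trans hab
  have hbπ : b < π := by
    have h := (lt_div_iff₀ (by positivity : (0:ℝ) < (r:ℝ) + 1)).mp hφ1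
    rw [hb_def]; linarith [h]
  have hsb : 0 < Real.sin b := Real.sin_pos_of_pos_of_lt_pi hb hbπ
  have ht0 : 0 < a / b := div_pos ha hb
  have ht1 : a / b < 1 := (div_lt_one hb).mpr hab
  have key : (a / b) * Real.sin b < Real.sin a := by
    have h := strictConcaveOn_sin_Icc.2
      ⟨le_rfl, Real.pi_pos.le⟩ ⟨hb.le, hbπ.le⟩ hb.ne
      (show (0:ℝ) < 1 - a / b by linarith) ht0 (by ring)
    simpa [smul_eq_mul, div_mul_cancel₀ a hb.ne'] using h
  have hab' : a / b = ((r : ℝ) - 1) / ((r : ℝ) + 1) := by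
    rw [ha_def, hb_def, mul_div_mul_right _ _ hφ0.ne']
  rw [gt_iff_lt, ← hab', div_lt_div_iff₀ hb hsb]
  have h2 := mul_lt_mul_of_pos_right key hb
  have h3 : a / b * Real.sin b * b = a * Real.sin b := by
    field_simp
  linarith
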